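/- arXiv:1501.00095 — 2 statements merged into one kernel-verified Lean document; each statement's English description precedes it below -/
import Mathlib

section
/- Let B and D be two indecomposable sub-bimodules of the A-A-bimodule A such that the product ideal BD is nonzero. Then supp(BD) = supp(B) ∩ supp(D). -/
set_option maxHeartbeats 1000000
set_option synthInstance.maxHeartbeats 400000

namespace DPF

open Matrix

/-- A finite quiver on `Fin n` (given by an arrow relation, no loops, no two-cycles)
whose underlying (undirected simple) graph is a tree. -/
structure TreeQuiver (n : ℕ) : Type where
  arr : Fin n → Fin n → Prop
  loopless : ∀ i, ¬ arr i i
  oneway : ∀ i j, arr i j → ¬ arr j i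
  isTree : (SimpleGraph.fromRel arr).IsTree

namespace TreeQuiver

variable {n : ℕ}

/-- The underlying simple graph of the quiver. -/
def G (Q : TreeQuiver n) : SimpleGraph (Fin n) := SimpleGraph.fromRel Q.arr

/-- `Q.Reach i j` : `j` is a successor of `i`, i.e. there is an oriented
(possibly trivial) path from `i` to `j`. -/
def Reach (Q : TreeQuiver n) (i j : Fin n) : Prop := Relation.ReflTransGen Q.arr i j

/-- `i` is a sink (no outgoing arrows). -/
def IsSink (Q : TreeQuiver n) (i : Fin n) : Prop := ∀ j, ¬ Q.arr i j

/-- `i` is a source (no incoming arrows). -/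
def IsSource (Q : TreeQuiver n) (i : Fin n) : Prop := ∀ j, ¬ Q.arr j i

/-- The degree of a vertex in the underlying graph. -/
noncomputable def deg (Q : TreeQuiver n) (i : Fin n) : ℕ := {j | Q.G.Adj i j}.ncard

/-- `i ∈ K(Q)`: `i` is a sink or a source. -/
def inK (Q : TreeQuiver n) (i : Fin n) : Prop := Q.IsSink i ∨ Q.IsSource i

/-- `i ∈ K'(Q)`: a sink or a source of degree at least 2. -/
def inK' (Q : TreeQuiver n) (i : Fin n) : Prop := Q.inK i ∧ 2 ≤ Q.deg i

/-- `Q` is admissible: all vertices of degree at least 3 are sinks or sources. -/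
def Admissible (Q : TreeQuiver n) : Prop := ∀ i, 3 ≤ Q.deg i → Q.inK i

/-- A maximal chain of `Q` is (the oriented path between) a pair `(s, t)` where `s` is a
source, `t` is a sink, and `t` is reachable from `s`. -/
def IsMaxChain (Q : TreeQuiver n) (s t : Fin n) : Prop :=
  Q.IsSource s ∧ Q.IsSink t ∧ Q.Reach s t

/-- The vertex set of a chain from `s` to `t`. -/
def chainSet (Q : TreeQuiver n) (s t : Fin n) : Set (Fin n) := {v | Q.Reach s v ∧ Q.Reach v t}

/-- The vertex set of the union of a collection `S` of (maximal) chains, i.e. of the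
corresponding "support" subgraph. -/
def suppVerts (Q : TreeQuiver n) (S : Set (Fin n × Fin n)) : Set (Fin n) :=
  {v | ∃ c ∈ S, v ∈ Q.chainSet c.1 c.2}

/-- The adjacency relation of the subgraph given by the union of the chains in `S`. -/
def suppAdj (Q : TreeQuiver n) (S : Set (Fin n × Fin n)) (i j : Fin n) : Prop :=
  Q.G.Adj i j ∧ ∃ c ∈ S, i ∈ Q.chainSet c.1 c.2 ∧ j ∈ Q.chainSet c.1 c.2

/-- The degree of a vertex in the subgraph given by the union of the chains in `S`. -/
noncomputable def suppDeg (Q : TreeQuiver n) (S : Set (Fin n × Fin n)) (i : Fin n) : ℕ :=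
  {j | Q.suppAdj S i j}.ncard

/-- The subgraph given by the union of the chains in `S` is connected. -/
def SuppConnected (Q : TreeQuiver n) (S : Set (Fin n × Fin n)) : Prop :=
  ∀ u ∈ Q.suppVerts S, ∀ v ∈ Q.suppVerts S, Relation.ReflTransGen (Q.suppAdj S) u v

/-- The two unions of (maximal) chains `S`, `T` are equal as subgraphs of `Q`. -/
def SuppEq (Q : TreeQuiver n) (S T : Set (Fin n × Fin n)) : Prop :=
  Q.suppVerts S = Q.suppVerts T ∧ ∀ i j, Q.suppAdj S i j ↔ Q.suppAdj T i j

/-- A path function: `α i` is a successor of `i` or `0` (here: `none`). -/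
def IsPathFun (Q : TreeQuiver n) (α : Fin n → Option (Fin n)) : Prop :=
  ∀ i j, α i = some j → Q.Reach i j

/-- Monotonicity of a path function. -/
def MonotoneFun (Q : TreeQuiver n) (α : Fin n → Option (Fin n)) : Prop :=
  ∀ i j x, Q.Reach j i → α i = some x → ∃ y, α j = some y ∧ Q.Reach y x

/-- The support of a function `α : Q₀ → Q₀ ∪ {0}`: the set of maximal chains containing
some value of `α`. -/
def suppF (Q : TreeQuiver n) (α : Fin n → Option (Fin n)) : Set (Fin n × Fin n) :=
  {c | Q.IsMaxChain c.1 c.2 ∧ ∃ i x, α i = some x ∧ x ∈ Q.chainSet c.1 c.2}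

/-- A special function: a monotone path function with connected support such that any
sink-or-source vertex of the support sent to `0` has degree `1` in the support. -/
def SpecialFun (Q : TreeQuiver n) (α : Fin n → Option (Fin n)) : Prop :=
  Q.IsPathFun α ∧ Q.MonotoneFun α ∧ Q.SuppConnected (Q.suppF α) ∧
    ∀ i, Q.inK i → i ∈ Q.suppVerts (Q.suppF α) → α i = none → Q.suppDeg (Q.suppF α) i = 1

/-- `Q.Gamma s t`: the vertex set of the connected component of `t` in the graph obtained
from `Q` by deleting the vertex `s`. -/
def Gamma (Q : TreeQuiver n) (s t : Fin n) : Set (Fin n) :=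
  {v | Relation.ReflTransGen (fun a b => Q.G.Adj a b ∧ a ≠ s ∧ b ≠ s) t v}



variable {n : ℕ} {Q : TreeQuiver n}

lemma arr_ne {i j : Fin n} (h : Q.arr i j) : i ≠ j := by
  rintro rfl; exact Q.loopless i h

lemma adj_of_arr {i j : Fin n} (h : Q.arr i j) : Q.G.Adj i j :=
  ⟨arr_ne h, Or.inl h⟩

lemma reach_of_arr {i j : Fin n} (h : Q.arr i j) : Q.Reach i j :=
  Relation.ReflTransGen.single h

lemma reach_refl (i : Fin n) : Q.Reach i i := Relation.ReflTransGen.refl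

lemma reach_trans {i j l : Fin n} (h : Q.Reach i j) (h' : Q.Reach j l) : Q.Reach i l :=
  Relation.ReflTransGen.trans h h'

lemma bridge {i j : Fin n} (h : Q.arr i j) : ¬ (Q.G.deleteEdges {s(i,j)}).Reachable i j := by
  have hb := (SimpleGraph.isAcyclic_iff_forall_adj_isBridge.mp Q.isTree.IsAcyclic) (adj_of_arr h)
  exact SimpleGraph.isBridge_iff.mp hb

/-- key structure lemma: a directed path either avoids a given arrow `β → μ`, or
crosses it exactly "forwards". -/
lemma reach_structure {β μ : Fin n} (hβμ : Q.arr β μ) {x y : Fin n} (h : Q.Reach x y) :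
    (Q.G.deleteEdges {s(β,μ)}).Reachable x y ∨
      (Q.Reach x β ∧ Q.Reach μ y ∧ (Q.G.deleteEdges {s(β,μ)}).Reachable x β ∧
        (Q.G.deleteEdges {s(β,μ)}).Reachable μ y) := by
  induction h using Relation.ReflTransGen.head_induction_on with
  | refl => exact Or.inl (SimpleGraph.Reachable.refl _)
  | @head a c hac hcy ih =>
    by_cases hedge : s(a, c) = s(β, μ)
    · rcases Sym2.eq_iff.mp hedge with ⟨rfl, rfl⟩ | ⟨rfl, rfl⟩
      · rcases ih with hdel | ⟨_, _, hdel2, _⟩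
        · exact Or.inr ⟨Relation.ReflTransGen.refl, hcy, SimpleGraph.Reachable.refl _, hdel⟩
        · exact absurd hdel2.symm (bridge hβμ)
      · exact absurd hβμ (Q.oneway _ _ hac)
    · have hadj : (Q.G.deleteEdges {s(β,μ)}).Adj a c := by
        rw [SimpleGraph.deleteEdges_adj]
        exact ⟨adj_of_arr hac, by simpa using hedge⟩
      rcases ih with hdel | ⟨h1, h2, h3, h4⟩
      · exact Or.inl (hadj.reachable.trans hdel)
      · exact Or.inr ⟨Relation.ReflTransGen.head hac h1, h2, hadj.reachable.trans h3, h4⟩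

lemma not_reach_of_arr {a c : Fin n} (h : Q.arr a c) : ¬ Q.Reach c a := by
  intro hr
  rcases reach_structure h hr with hdel | ⟨_, _, hdel, _⟩ <;>
    exact bridge h hdel.symm

lemma reach_antisymm {a b : Fin n} (h : Q.Reach a b) (h' : Q.Reach b a) : a = b := by
  rcases Relation.ReflTransGen.cases_head h with rfl | ⟨c, hac, hcb⟩
  · rfl
  · exact absurd (reach_trans hcb h') (not_reach_of_arr hac)

/-- if `v → w` is an arrow then there is nothing strictly between `v` and `w`. -/
lemma reach_cover {v w m : Fin n} (hvw : Q.arr v w) (h1 : Q.Reach v m) (h2 : Q.Reach m w) :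
    m = v ∨ m = w := by
  rcases reach_structure hvw h1 with hd1 | ⟨hmv', hwm, hd1, hd1'⟩
  · rcases reach_structure hvw h2 with hd2 | ⟨hmv, _, _, _⟩
    · exact absurd (hd1.trans hd2) (bridge hvw)
    · exact Or.inl (reach_antisymm hmv h1)
  · exact Or.inr (reach_antisymm h2 hwm)

/-- a directed path into the tail of an arrow avoids the arrow. -/
lemma reach_del_bot {β μ x : Fin n} (hβμ : Q.arr β μ) (h : Q.Reach x β) :
    (Q.G.deleteEdges {s(β,μ)}).Reachable x β := by
  rcases reach_structure hβμ h with hd | ⟨_, hμβ, _, _⟩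
  · exact hd
  · exact absurd hμβ (not_reach_of_arr hβμ)

/-- a directed path out of the head of an arrow avoids the arrow. -/
lemma reach_del_top {β μ y : Fin n} (hβμ : Q.arr β μ) (h : Q.Reach μ y) :
    (Q.G.deleteEdges {s(β,μ)}).Reachable μ y := by
  rcases reach_structure hβμ h with hd | ⟨hμβ, _, _, _⟩
  · exact hd
  · exact absurd hμβ (not_reach_of_arr hβμ)





variable {n : ℕ} {Q : TreeQuiver n}

lemma fromRel_flip : SimpleGraph.fromRel (flip Q.arr) = SimpleGraph.fromRel Q.arr := by
  ext x y
  simp only [SimpleGraph.fromRel_adj, flip]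
  tauto

/-- The opposite quiver. -/
def op (Q : TreeQuiver n) : TreeQuiver n where
  arr := flip Q.arr
  loopless := fun i h => Q.loopless i h
  oneway := fun i j h h' => Q.oneway j i h h'
  isTree := by rw [fromRel_flip]; exact Q.isTree

lemma op_G : (op Q).G = Q.G := fromRel_flip

lemma op_reach {i j : Fin n} : (op Q).Reach i j ↔ Q.Reach j i := by
  constructor
  · intro h; exact (Relation.reflTransGen_swap).mp h
  · intro h; exact (Relation.reflTransGen_swap).mp h

lemma op_deg (i : Fin n) : (op Q).deg i = Q.deg i := by
  unfold deg; rw [op_G]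

lemma op_admissible (h : Q.Admissible) : (op Q).Admissible := by
  intro i hdeg
  rw [op_deg] at hdeg
  rcases h i hdeg with hs | hs
  · exact Or.inr (fun j hj => hs j hj)
  · exact Or.inl (fun j hj => hs j hj)

/-- a non-source vertex has at most one out-neighbour (admissibility). -/
lemma out_unique (hadm : Q.Admissible) {u w x y : Fin n} (huw : Q.arr u w)
    (hx : Q.arr w x) (hy : Q.arr w y) : x = y := by
  by_contra hxy
  have hux : u ≠ x := by rintro rfl; exact Q.oneway _ _ hx huw
  have huy : u ≠ y := by rintro rfl; exact Q.oneway _ _ hy huw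
  have hsub : ({u, x, y} : Set (Fin n)) ⊆ {j | Q.G.Adj w j} := by
    rintro z (rfl | rfl | rfl)
    · exact (adj_of_arr huw).symm
    · exact adj_of_arr hx
    · exact adj_of_arr hy
  have hcard : ({u, x, y} : Set (Fin n)).ncard = 3 := by
    rw [Set.ncard_eq_three]; exact ⟨u, x, y, hux, huy, hxy, rfl⟩
  have h3 : 3 ≤ Q.deg w := by
    rw [← hcard]
    exact Set.ncard_le_ncard hsub (Set.toFinite _)
  rcases hadm w h3 with hs | hs
  · exact hs x hx
  · exact hs u huw

/-- successors of a non-source vertex form a chain (admissibility). -/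
lemma chain_up (hadm : Q.Admissible) {u w : Fin n} (huw : Q.arr u w) {x y : Fin n}
    (hx : Q.Reach w x) (hy : Q.Reach w y) : Q.Reach x y ∨ Q.Reach y x := by
  induction hx using Relation.ReflTransGen.head_induction_on generalizing u y with
  | refl => exact Or.inl hy
  | @head a c hac hcx ih =>
    rcases Relation.ReflTransGen.cases_head hy with rfl | ⟨y₁, hay₁, hy₁y⟩
    · exact Or.inr (Relation.ReflTransGen.head hac hcx)
    · have : y₁ = c := out_unique hadm huw hay₁ hac
      subst this
      exact ih hac hy₁y

lemma chain_down (hadm : Q.Admissible) {u w : Fin n} (hwu : Q.arr w u) {x y : Fin n}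
    (hx : Q.Reach x w) (hy : Q.Reach y w) : Q.Reach x y ∨ Q.Reach y x := by
  have := chain_up (Q := op Q) (op_admissible hadm) (u := u) (w := w)
    (x := x) (y := y) hwu (op_reach.mpr hx) (op_reach.mpr hy)
  rcases this with h | h
  · exact Or.inr (op_reach.mp h)
  · exact Or.inl (op_reach.mp h)

/-- the set of strict successors. -/
def sUp (Q : TreeQuiver n) (x : Fin n) : Set (Fin n) := {y | Q.Reach x y ∧ y ≠ x}

lemma exists_sink_above (v : Fin n) : ∃ t, Q.Reach v t ∧ Q.IsSink t := by
  have key : ∀ (N : ℕ) (v : Fin n), (sUp Q v).ncard ≤ N → ∃ t, Q.Reach v t ∧ Q.IsSink t := by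
    intro N
    induction N with
    | zero =>
      intro v hv
      by_cases hs : Q.IsSink v
      · exact ⟨v, reach_refl v, hs⟩
      · exfalso
        simp only [IsSink, not_forall, not_not] at hs
        obtain ⟨c, hc'⟩ := hs
        have hcv : c ≠ v := fun h => Q.loopless v (h ▸ hc')
        have hcmem : c ∈ sUp Q v := ⟨reach_of_arr hc', hcv⟩
        have h0 : (sUp Q v).ncard = 0 := Nat.le_zero.mp hv
        rw [Set.ncard_eq_zero (Set.toFinite _)] at h0
        rw [h0] at hcmem
        exact hcmem
    | succ N ih =>
      intro v hv
      by_cases hs : Q.IsSink v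
      · exact ⟨v, reach_refl v, hs⟩
      · simp only [IsSink, not_forall, not_not] at hs
        obtain ⟨c, hc'⟩ := hs
        have hcv : c ≠ v := fun h => Q.loopless v (h ▸ hc')
        have hsub : sUp Q c ⊆ sUp Q v := by
          rintro z ⟨hz, hzc⟩
          refine ⟨reach_trans (reach_of_arr hc') hz, ?_⟩
          rintro rfl
          exact not_reach_of_arr hc' hz
        have hss : sUp Q c ⊂ sUp Q v :=
          Set.ssubset_def.mpr ⟨hsub, fun hsup => (hsup ⟨reach_of_arr hc', hcv⟩ : c ∈ sUp Q c).2 rfl⟩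
        have hlt : (sUp Q c).ncard < (sUp Q v).ncard := Set.ncard_lt_ncard hss (Set.toFinite _)
        obtain ⟨t, ht, hts⟩ := ih c (by omega)
        exact ⟨t, reach_trans (reach_of_arr hc') ht, hts⟩
  exact key (sUp Q v).ncard v le_rfl

lemma op_sink {i : Fin n} : (op Q).IsSink i ↔ Q.IsSource i := Iff.rfl

lemma op_source {i : Fin n} : (op Q).IsSource i ↔ Q.IsSink i := Iff.rfl

lemma exists_source_below (v : Fin n) : ∃ s, Q.IsSource s ∧ Q.Reach s v := by
  obtain ⟨t, ht, hts⟩ := exists_sink_above (Q := op Q) v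
  exact ⟨t, hts, op_reach.mp ht⟩

/-- a finite nonempty `Reach`-totally-ordered set has a maximum. -/
lemma finset_max (T : Finset (Fin n)) (hne : T.Nonempty)
    (htot : ∀ a ∈ T, ∀ b ∈ T, Q.Reach a b ∨ Q.Reach b a) :
    ∃ m ∈ T, ∀ a ∈ T, Q.Reach a m := by
  induction T using Finset.cons_induction with
  | empty => exact absurd hne (by simp)
  | cons a T ha ih =>
    rcases T.eq_empty_or_nonempty with rfl | hTne
    · exact ⟨a, by simp, by simp [reach_refl]⟩
    · obtain ⟨m, hmT, hm⟩ := ih hTne (fun x hx y hy =>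
        htot x (Finset.mem_cons_of_mem hx) y (Finset.mem_cons_of_mem hy))
      rcases htot a (Finset.mem_cons_self a T) m (Finset.mem_cons_of_mem hmT) with h | h
      · refine ⟨m, Finset.mem_cons_of_mem hmT, ?_⟩
        intro x hx
        rcases Finset.mem_cons.mp hx with rfl | hx'
        · exact h
        · exact hm x hx'
      · refine ⟨a, Finset.mem_cons_self a T, ?_⟩
        intro x hx
        rcases Finset.mem_cons.mp hx with rfl | hx'
        · exact reach_refl x
        · exact reach_trans (hm x hx') h




/-- `y` contains `x` as intervals. -/
def cmpP (Q : TreeQuiver n) (x y : Fin n × Fin n) : Prop :=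
  Q.Reach y.1 x.1 ∧ Q.Reach x.2 y.2

def stepP (Q : TreeQuiver n) (S : Set (Fin n × Fin n)) (x y : Fin n × Fin n) : Prop :=
  x ∈ S ∧ y ∈ S ∧ (cmpP Q x y ∨ cmpP Q y x)

/-- An abstract "indecomposable ideal support": a set of intervals of the tree quiver,
closed under extension, and connected under comparability. -/
structure GoodSet (Q : TreeQuiver n) (S : Set (Fin n × Fin n)) : Prop where
  valid : ∀ p ∈ S, Q.Reach p.1 p.2
  ext : ∀ p ∈ S, ∀ s t, Q.Reach s p.1 → Q.Reach p.2 t → (s, t) ∈ S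
  conn : ∀ p ∈ S, ∀ q ∈ S, Relation.ReflTransGen (stepP Q S) p q

def swapS (S : Set (Fin n × Fin n)) : Set (Fin n × Fin n) := {p | (p.2, p.1) ∈ S}

lemma GoodSet.opp {S : Set (Fin n × Fin n)} (h : GoodSet Q S) :
    GoodSet (op Q) (swapS S) where
  valid := fun p hp => op_reach.mpr (h.valid (p.2, p.1) hp)
  ext := fun p hp s t hs ht =>
    h.ext (p.2, p.1) hp t s (op_reach.mp ht) (op_reach.mp hs)
  conn := by
    intro p hp q hq
    have hmap : ∀ x y, stepP Q S x y → stepP (op Q) (swapS S) x.swap y.swap := by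
      rintro x y ⟨hx, hy, hc | hc⟩
      · exact ⟨hx, hy, Or.inl ⟨op_reach.mpr hc.2, op_reach.mpr hc.1⟩⟩
      · exact ⟨hx, hy, Or.inr ⟨op_reach.mpr hc.2, op_reach.mpr hc.1⟩⟩
    have := Relation.ReflTransGen.lift Prod.swap hmap _ _ (h.conn (p.2, p.1) hp (q.2, q.1) hq)
    exact this

/-- If no left endpoint of `S` is above `μ`, and some left endpoint is on the `β`-side of
the arrow `β → μ`, then all left endpoints are on the `β`-side. -/
lemma claimC {S : Set (Fin n × Fin n)} (hS : GoodSet Q S) {β μ : Fin n} (hβμ : Q.arr β μ)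
    (hstart : ∀ p ∈ S, ¬ Q.Reach μ p.1)
    {a : Fin n × Fin n} (haS : a ∈ S)
    (hbase : (Q.G.deleteEdges {s(β,μ)}).Reachable β a.1) :
    ∀ p ∈ S, (Q.G.deleteEdges {s(β,μ)}).Reachable β p.1 := by
  intro p hp
  have hconn := hS.conn a haS p hp
  clear hp
  induction hconn with
  | refl => exact hbase
  | @tail x y _ hstep ih =>
    obtain ⟨hxS, hyS, hcmp | hcmp⟩ := hstep
    · rcases reach_structure hβμ hcmp.1 with hd | ⟨_, _, hd, _⟩
      · exact ih.trans hd.symm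
      · exact hd.symm
    · rcases reach_structure hβμ hcmp.1 with hd | ⟨_, hμ, _, _⟩
      · exact ih.trans hd
      · exact absurd hμ (hstart y hyS)

/-- dual statement for right endpoints. -/
lemma claimC' {S : Set (Fin n × Fin n)} (hS : GoodSet Q S) {β μ : Fin n} (hβμ : Q.arr β μ)
    (hend : ∀ p ∈ S, ¬ Q.Reach p.2 β)
    {c : Fin n × Fin n} (hcS : c ∈ S)
    (hbase : (Q.G.deleteEdges {s(β,μ)}).Reachable μ c.2) :
    ∀ p ∈ S, (Q.G.deleteEdges {s(β,μ)}).Reachable μ p.2 := by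
  intro p hp
  have hconn := hS.conn c hcS p hp
  clear hp
  induction hconn with
  | refl => exact hbase
  | @tail x y _ hstep ih =>
    obtain ⟨hxS, hyS, hcmp | hcmp⟩ := hstep
    · rcases reach_structure hβμ hcmp.2 with hd | ⟨_, _, _, hd⟩
      · exact ih.trans hd
      · exact hd
    · rcases reach_structure hβμ hcmp.2 with hd | ⟨hr, _, _, _⟩
      · exact ih.trans hd.symm
      · exact absurd hr (hend y hyS)

/-- The main separation lemma. -/
lemma mainA (hadm : Q.Admissible) {SB SD : Set (Fin n × Fin n)}
    (hSB : GoodSet Q SB) (hSD : GoodSet Q SD)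
    (pivot : ∃ s₀ m₀ t₀, (m₀, t₀) ∈ SB ∧ (s₀, m₀) ∈ SD)
    {i j : Fin n} (hij : Q.arr i j ∨ i = j)
    {a b c d : Fin n} (hab : (a, b) ∈ SB) (hai : Q.Reach a i)
    (hcd : (c, d) ∈ SD) (hci : Q.Reach c i) (hjd : Q.Reach j d)
    (H2 : ∀ m, Q.Reach m i → ∀ s, (s, m) ∉ SD)
    (F2 : ∀ m s t, Q.Reach j m → (m, t) ∈ SB → (s, m) ∈ SD → Q.Reach s i → False) :
    False := by
  classical
  obtain ⟨w, hiw, hwd, hjw⟩ : ∃ w, Q.arr i w ∧ Q.Reach w d ∧ Q.Reach j w := by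
    rcases hij with h | rfl
    · exact ⟨j, h, hjd, reach_refl j⟩
    · have hdi : ¬ Q.Reach d i := fun h' => H2 d h' c hcd
      rcases Relation.ReflTransGen.cases_head hjd with heq | ⟨w, hiw, hwd⟩
      · subst heq; exact absurd (reach_refl i) hdi
      · exact ⟨w, hiw, hwd, reach_of_arr hiw⟩
  obtain ⟨s₀, m₀, t₀, hm₀B, hm₀D⟩ := pivot
  by_cases hN : ∃ m t, (m, t) ∈ SB ∧ Q.Reach w m
  · set T : Finset (Fin n) :=
      Finset.univ.filter (fun m => (∃ t, (m, t) ∈ SB) ∧ Q.Reach w m) with hT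
    have hTmem : ∀ m, m ∈ T ↔ (∃ t, (m, t) ∈ SB) ∧ Q.Reach w m := by
      intro m; simp [hT]
    have hTne : T.Nonempty := by
      obtain ⟨m, t, hmt, hwm⟩ := hN
      exact ⟨m, (hTmem m).mpr ⟨⟨t, hmt⟩, hwm⟩⟩
    obtain ⟨β', hβ'T, hβ'max⟩ := finset_max T hTne (fun x hx y hy =>
      chain_up hadm hiw ((hTmem x).mp hx).2 ((hTmem y).mp hy).2)
    obtain ⟨⟨t₀', hβ'B⟩, hwβ'⟩ := (hTmem β').mp hβ'T
    by_cases hdβ' : Q.Reach d β'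
    · exact F2 β' c t₀' (reach_trans hjw hwβ') hβ'B
        (hSD.ext (c, d) hcd c β' (reach_refl c) hdβ') hci
    · have hβ'd : Q.Reach β' d := (chain_up hadm hiw hwd hwβ').resolve_left hdβ'
      rcases Relation.ReflTransGen.cases_head hβ'd with rfl | ⟨μ'', hβμ'', hμ''d⟩
      · exact hdβ' (reach_refl β')
      · have hiβ' : Q.Reach i β' := reach_trans (reach_of_arr hiw) hwβ'
        have hstart : ∀ p ∈ SB, ¬ Q.Reach μ'' p.1 := by
          intro p hpS hμp
          have hpT : p.1 ∈ T := (hTmem p.1).mpr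
            ⟨⟨p.2, hpS⟩, reach_trans hwβ' (Relation.ReflTransGen.head hβμ'' hμp)⟩
          have h1 : Q.Reach p.1 β' := hβ'max p.1 hpT
          have h2 : Q.Reach β' p.1 := Relation.ReflTransGen.head hβμ'' hμp
          rw [reach_antisymm h1 h2] at hμp
          exact not_reach_of_arr hβμ'' hμp
        have hC := claimC hSB hβμ'' hstart hab
          (reach_del_bot hβμ'' (reach_trans hai hiβ')).symm
        have hend : ∀ p ∈ SD, ¬ Q.Reach p.2 β' := by
          intro p hpS hpβ'
          rcases chain_down hadm hβμ'' hpβ' hiβ' with hmi | him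
          · exact H2 p.2 hmi p.1 hpS
          · have hwm : Q.Reach w p.2 := by
              rcases chain_down hadm hβμ'' hpβ' hwβ' with hmw | hwm
              · rcases reach_cover hiw him hmw with hpi | hpw
                · exact absurd (hpi ▸ reach_refl p.2) (fun hr => H2 p.2 hr p.1 hpS)
                · exact hpw ▸ reach_refl p.2
              · exact hwm
            have hmB : (p.2, t₀') ∈ SB :=
              hSB.ext (β', t₀') hβ'B p.2 t₀' hpβ' (reach_refl t₀')
            have hjm : Q.Reach j p.2 := reach_trans hjw hwm
            have hs₁β' : Q.Reach p.1 β' := reach_trans (hSD.valid p hpS) hpβ'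
            rcases chain_down hadm hβμ'' hs₁β' hiβ' with hsi | his
            · exact F2 p.2 p.1 t₀' hjm hmB hpS hsi
            · exact F2 p.2 i t₀' hjm hmB
                (hSD.ext (p.1, p.2) hpS i p.2 his (reach_refl p.2)) (reach_refl i)
        have hC' := claimC' hSD hβμ'' hend hcd (reach_del_top hβμ'' hμ''d)
        exact bridge hβμ'' ((hC (m₀, t₀) hm₀B).trans (hC' (s₀, m₀) hm₀D).symm)
  · push_neg at hN
    have hstart : ∀ p ∈ SB, ¬ Q.Reach w p.1 := fun p hp hr => hN p.1 p.2 hp hr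
    have hC := claimC hSB hiw hstart hab (reach_del_bot hiw hai).symm
    have hend : ∀ p ∈ SD, ¬ Q.Reach p.2 i := fun p hp hr => H2 p.2 hr p.1 hp
    have hC' := claimC' hSD hiw hend hcd (reach_del_top hiw hwd)
    exact bridge hiw ((hC (m₀, t₀) hm₀B).trans (hC' (s₀, m₀) hm₀D).symm)

/-- The dual separation lemma. -/
lemma mainA' (hadm : Q.Admissible) {SB SD : Set (Fin n × Fin n)}
    (hSB : GoodSet Q SB) (hSD : GoodSet Q SD)
    (pivot : ∃ s₀ m₀ t₀, (m₀, t₀) ∈ SB ∧ (s₀, m₀) ∈ SD)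
    {i j : Fin n} (hij : Q.arr i j ∨ i = j)
    {a b c d : Fin n} (hab : (a, b) ∈ SB) (hai : Q.Reach a i) (hjb : Q.Reach j b)
    (hcd : (c, d) ∈ SD) (hjd : Q.Reach j d)
    (H2' : ∀ m, Q.Reach j m → ∀ t, (m, t) ∉ SB)
    (F2' : ∀ m s t, Q.Reach m i → (m, t) ∈ SB → (s, m) ∈ SD → Q.Reach j t → False) :
    False := by
  obtain ⟨s₀, m₀, t₀, hm₀B, hm₀D⟩ := pivot
  refine mainA (Q := op Q) (op_admissible hadm) hSD.opp hSB.opp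
    (i := j) (j := i) (a := d) (b := c) (c := b) (d := a)
    ⟨t₀, m₀, s₀, hm₀D, hm₀B⟩ ?_ hcd (op_reach.mpr hjd) hab (op_reach.mpr hjb)
    (op_reach.mpr hai) ?_ ?_
  · rcases hij with h | rfl
    · exact Or.inl h
    · exact Or.inr rfl
  · intro m hm s hs
    exact H2' m (op_reach.mp hm) s hs
  · intro m s t h1 h2 h3 h4
    exact F2' m t s (op_reach.mp h1) h3 h2 (op_reach.mp h4)

def compS (SB SD : Set (Fin n × Fin n)) : Set (Fin n × Fin n) :=
  {p | ∃ m, (m, p.2) ∈ SB ∧ (p.1, m) ∈ SD}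

lemma combi_vert (hadm : Q.Admissible) {SB SD : Set (Fin n × Fin n)}
    (hSB : GoodSet Q SB) (hSD : GoodSet Q SD)
    (pivot : ∃ s₀ m₀ t₀, (m₀, t₀) ∈ SB ∧ (s₀, m₀) ∈ SD) (v : Fin n) :
    (∃ p ∈ compS SB SD, Q.Reach p.1 v ∧ Q.Reach v p.2) ↔
      (∃ p ∈ SB, Q.Reach p.1 v ∧ Q.Reach v p.2) ∧
      (∃ p ∈ SD, Q.Reach p.1 v ∧ Q.Reach v p.2) := by
  constructor
  · rintro ⟨p, ⟨m, hmB, hmD⟩, hv1, hv2⟩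
    constructor
    · exact ⟨p, hSB.ext (m, p.2) hmB p.1 p.2 (hSD.valid (p.1, m) hmD) (reach_refl p.2),
        hv1, hv2⟩
    · exact ⟨p, hSD.ext (p.1, m) hmD p.1 p.2 (reach_refl p.1) (hSB.valid (m, p.2) hmB),
        hv1, hv2⟩
  · rintro ⟨⟨pB, hpB, hav, hvb⟩, ⟨pD, hpD, hcv, hvd⟩⟩
    by_contra hF
    have hF2 : ∀ m s t, (m, t) ∈ SB → (s, m) ∈ SD → Q.Reach s v → Q.Reach v t → False := by
      intro m s t hB hD hsv hvt
      exact hF ⟨(s, t), ⟨m, hB, hD⟩, hsv, hvt⟩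
    by_cases hDex : ∃ m s, (s, m) ∈ SD ∧ Q.Reach m v
    · obtain ⟨m₁, s₁, hsD, hm₁v⟩ := hDex
      refine mainA' hadm hSB hSD pivot (i := v) (j := v) (Or.inr rfl)
        hpB hav hvb hpD hvd ?_ ?_
      · intro m₂ hvm₂ t₂ hmB
        exact hF2 m₂ s₁ t₂ hmB
          (hSD.ext (s₁, m₁) hsD s₁ m₂ (reach_refl s₁) (reach_trans hm₁v hvm₂))
          (reach_trans (hSD.valid (s₁, m₁) hsD) hm₁v)
          (reach_trans hvm₂ (hSB.valid (m₂, t₂) hmB))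
      · intro m s t h1 h2 h3 h4
        exact hF2 m s t h2 h3 (reach_trans (hSD.valid (s, m) h3) h1) h4
    · push_neg at hDex
      refine mainA hadm hSB hSD pivot (i := v) (j := v) (Or.inr rfl)
        hpB hav hpD hcv hvd ?_ ?_
      · intro m hmv s hsm
        exact hDex m s hsm hmv
      · intro m s t h1 h2 h3 h4
        exact hF2 m s t h2 h3 h4 (reach_trans h1 (hSB.valid (m, t) h2))

lemma combi_edge (hadm : Q.Admissible) {SB SD : Set (Fin n × Fin n)}
    (hSB : GoodSet Q SB) (hSD : GoodSet Q SD)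
    (pivot : ∃ s₀ m₀ t₀, (m₀, t₀) ∈ SB ∧ (s₀, m₀) ∈ SD) {i j : Fin n} (harr : Q.arr i j) :
    (∃ p ∈ compS SB SD, Q.Reach p.1 i ∧ Q.Reach j p.2) ↔
      (∃ p ∈ SB, Q.Reach p.1 i ∧ Q.Reach j p.2) ∧
      (∃ p ∈ SD, Q.Reach p.1 i ∧ Q.Reach j p.2) := by
  constructor
  · rintro ⟨p, ⟨m, hmB, hmD⟩, hv1, hv2⟩
    constructor
    · exact ⟨p, hSB.ext (m, p.2) hmB p.1 p.2 (hSD.valid (p.1, m) hmD) (reach_refl p.2),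
        hv1, hv2⟩
    · exact ⟨p, hSD.ext (p.1, m) hmD p.1 p.2 (reach_refl p.1) (hSB.valid (m, p.2) hmB),
        hv1, hv2⟩
  · rintro ⟨⟨pB, hpB, hai, hjb⟩, ⟨pD, hpD, hci, hjd⟩⟩
    by_contra hF
    have hF2 : ∀ m s t, (m, t) ∈ SB → (s, m) ∈ SD → Q.Reach s i → Q.Reach j t → False := by
      intro m s t hB hD hsi hjt
      exact hF ⟨(s, t), ⟨m, hB, hD⟩, hsi, hjt⟩
    by_cases hDex : ∃ m s, (s, m) ∈ SD ∧ Q.Reach m i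
    · obtain ⟨m₁, s₁, hsD, hm₁i⟩ := hDex
      refine mainA' hadm hSB hSD pivot (Or.inl harr) hpB hai hjb hpD hjd ?_ ?_
      · intro m₂ hjm₂ t₂ hmB
        exact hF2 m₂ s₁ t₂ hmB
          (hSD.ext (s₁, m₁) hsD s₁ m₂ (reach_refl s₁)
            (reach_trans hm₁i (Relation.ReflTransGen.head harr hjm₂)))
          (reach_trans (hSD.valid (s₁, m₁) hsD) hm₁i)
          (reach_trans hjm₂ (hSB.valid (m₂, t₂) hmB))
      · intro m s t h1 h2 h3 h4
        exact hF2 m s t h2 h3 (reach_trans (hSD.valid (s, m) h3) h1) h4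
    · push_neg at hDex
      refine mainA hadm hSB hSD pivot (Or.inl harr) hpB hai hpD hci hjd ?_ ?_
      · intro m hmi s hsm
        exact hDex m s hsm hmi
      · intro m s t h1 h2 h3 h4
        exact hF2 m s t h2 h3 h4 (reach_trans h1 (hSB.valid (m, t) h2))


/-- The set of maximal chains of `S`. -/
def MCset (Q : TreeQuiver n) (S : Set (Fin n × Fin n)) : Set (Fin n × Fin n) :=
  {c | Q.IsMaxChain c.1 c.2 ∧ c ∈ S}

lemma vchar {S : Set (Fin n × Fin n)}
    (hv : ∀ p ∈ S, Q.Reach p.1 p.2)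
    (he : ∀ p ∈ S, ∀ s t, Q.Reach s p.1 → Q.Reach p.2 t → (s, t) ∈ S) (v : Fin n) :
    v ∈ Q.suppVerts (MCset Q S) ↔ ∃ p ∈ S, Q.Reach p.1 v ∧ Q.Reach v p.2 := by
  constructor
  · rintro ⟨c, ⟨hmc, hcS⟩, h1, h2⟩
    exact ⟨c, hcS, h1, h2⟩
  · rintro ⟨p, hpS, h1, h2⟩
    obtain ⟨s, hss, hsr⟩ := exists_source_below (Q := Q) p.1
    obtain ⟨t, htr, hts⟩ := exists_sink_above (Q := Q) p.2
    refine ⟨(s, t), ⟨⟨hss, hts, ?_⟩, he p hpS s t hsr htr⟩, ?_, ?_⟩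
    · exact reach_trans hsr (reach_trans (hv p hpS) htr)
    · exact reach_trans hsr h1
    · exact reach_trans h2 htr

lemma echar {S : Set (Fin n × Fin n)}
    (hv : ∀ p ∈ S, Q.Reach p.1 p.2)
    (he : ∀ p ∈ S, ∀ s t, Q.Reach s p.1 → Q.Reach p.2 t → (s, t) ∈ S)
    {i j : Fin n} (harr : Q.arr i j) :
    Q.suppAdj (MCset Q S) i j ↔ ∃ p ∈ S, Q.Reach p.1 i ∧ Q.Reach j p.2 := by
  constructor
  · rintro ⟨hadj, c, ⟨hmc, hcS⟩, ⟨h1i, hi2⟩, ⟨h1j, hj2⟩⟩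
    exact ⟨c, hcS, h1i, hj2⟩
  · rintro ⟨p, hpS, h1, h2⟩
    obtain ⟨s, hss, hsr⟩ := exists_source_below (Q := Q) p.1
    obtain ⟨t, htr, hts⟩ := exists_sink_above (Q := Q) p.2
    have hst : (s, t) ∈ S := he p hpS s t hsr htr
    have hsi : Q.Reach s i := reach_trans hsr h1
    have hjt : Q.Reach j t := reach_trans h2 htr
    refine ⟨adj_of_arr harr, (s, t), ⟨⟨hss, hts, reach_trans hsi
      (Relation.ReflTransGen.head harr hjt)⟩, hst⟩, ⟨hsi, Relation.ReflTransGen.head harr hjt⟩,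
      ⟨reach_trans hsi (reach_of_arr harr), hjt⟩⟩

lemma suppAdj_comm {S : Set (Fin n × Fin n)} {i j : Fin n} :
    Q.suppAdj S i j ↔ Q.suppAdj S j i := by
  constructor <;> rintro ⟨hadj, c, hc, h1, h2⟩ <;> exact ⟨hadj.symm, c, hc, h2, h1⟩

end TreeQuiver

open TreeQuiver

section Algebra

variable {n : ℕ} (Q : TreeQuiver n) (k : Type) [Field k]

/-- The path algebra of the tree quiver `Q` over `k`, realized concretely as the
subalgebra of `Matrix (Fin n) (Fin n) k` of matrices supported on the reachability
relation; the matrix unit in position `(j, i)` corresponds to the unique path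
`a_{ji}` from `i` to `j`. -/
def pathAlg : Subalgebra k (Matrix (Fin n) (Fin n) k) where
  carrier := {x | ∀ i j, ¬ Q.Reach j i → x i j = 0}
  mul_mem' := by
    intro x y hx hy i j hij
    rw [Matrix.mul_apply]
    refine Finset.sum_eq_zero fun m _ => ?_
    by_cases h1 : Q.Reach m i
    · have h2 : ¬ Q.Reach j m := fun h2 => hij (Relation.ReflTransGen.trans h2 h1)
      rw [hy m j h2, mul_zero]
    · rw [hx i m h1, zero_mul]
  one_mem' := by
    intro i j hij
    have hne : i ≠ j := by rintro rfl; exact hij Relation.ReflTransGen.refl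
    exact Matrix.one_apply_ne hne
  add_mem' := by
    intro x y hx hy i j hij
    simp only [Matrix.add_apply, hx i j hij, hy i j hij, add_zero]
  zero_mem' := by intro i j hij; rfl
  algebraMap_mem' := by
    intro r i j hij
    have hne : i ≠ j := by rintro rfl; exact hij Relation.ReflTransGen.refl
    simp [Matrix.algebraMap_matrix_apply, hne]

theorem std_mem (t s : Fin n) (h : Q.Reach s t) :
    Matrix.single t s (1 : k) ∈ pathAlg Q k := by
  intro i j hij
  by_cases h1 : t = i ∧ s = j
  · obtain ⟨rfl, rfl⟩ := h1
    exact absurd h hij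
  · simp only [Matrix.single, Matrix.of_apply, if_neg h1]

/-- The path `a_{ts}` from `s` to `t`, as an element of the path algebra
(by convention `0` if `t` is not a successor of `s`). -/
noncomputable def aEl (t s : Fin n) : pathAlg Q k :=
  haveI := Classical.dec (Q.Reach s t)
  if h : Q.Reach s t then ⟨Matrix.single t s 1, std_mem Q k t s h⟩ else 0

/-- The trivial path `e_i` at the vertex `i`. -/
noncomputable def e (i : Fin n) : pathAlg Q k :=
  ⟨Matrix.single i i 1, std_mem Q k i i Relation.ReflTransGen.refl⟩

/-- `B` is a two-sided ideal of the path algebra, i.e. a sub-bimodule of the regular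
`A`-`A`-bimodule `A`. -/
def IsIdeal (B : Submodule k ↥(pathAlg Q k)) : Prop :=
  (∀ a : ↥(pathAlg Q k), ∀ x ∈ B, a * x ∈ B) ∧ (∀ a : ↥(pathAlg Q k), ∀ x ∈ B, x * a ∈ B)

/-- `B` is an indecomposable sub-bimodule of `A`: a nonzero two-sided ideal which does not
decompose as an (internal) direct sum of two nonzero sub-bimodules. -/
def Indec (B : Submodule k ↥(pathAlg Q k)) : Prop :=
  IsIdeal Q k B ∧ B ≠ ⊥ ∧
    ∀ B1 B2 : Submodule k ↥(pathAlg Q k), IsIdeal Q k B1 → IsIdeal Q k B2 →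
      B1 ⊔ B2 = B → B1 ⊓ B2 = ⊥ → B1 = ⊥ ∨ B2 = ⊥

/-- The support of a two-sided ideal `B`: the set of maximal chains `(s, t)` of `Q`
such that `a_{ts} ∈ B`. -/
def suppB (B : Submodule k ↥(pathAlg Q k)) : Set (Fin n × Fin n) :=
  {c | Q.IsMaxChain c.1 c.2 ∧ aEl Q k c.2 c.1 ∈ B}

/-- The indecomposable projective left module `P_j = A e_j`, as a left ideal of `A`. -/
def Pmod (j : Fin n) : Submodule ↥(pathAlg Q k) ↥(pathAlg Q k) where
  carrier := {x | x * e Q k j = x}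
  add_mem' := by
    intro a b ha hb
    show (a + b) * e Q k j = a + b
    rw [add_mul]
    rw [show a * e Q k j = a from ha, show b * e Q k j = b from hb]
  zero_mem' := by
    show (0 : ↥(pathAlg Q k)) * e Q k j = 0
    rw [zero_mul]
  smul_mem' := by
    intro c x hx
    show (c • x) * e Q k j = c • x
    rw [smul_eq_mul, mul_assoc, show x * e Q k j = x from hx]

/-- `B e_i`, as a left ideal (left `A`-submodule) of `A`; here `B` is a two-sided ideal. -/
def BeiL (B : Submodule k ↥(pathAlg Q k)) (hB : IsIdeal Q k B) (i : Fin n) :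
    Submodule ↥(pathAlg Q k) ↥(pathAlg Q k) where
  carrier := {x | x ∈ B ∧ x * e Q k i = x}
  add_mem' := by
    intro a b ha hb
    exact ⟨B.add_mem ha.1 hb.1, by rw [add_mul, ha.2, hb.2]⟩
  zero_mem' := ⟨B.zero_mem, by rw [zero_mul]⟩
  smul_mem' := by
    intro c x hx
    refine ⟨?_, ?_⟩
    · show c * x ∈ B
      exact hB.1 c x hx.1
    · show (c • x) * e Q k i = c • x
      rw [smul_eq_mul, mul_assoc, hx.2]

/-- A left `A`-submodule `N` of `A` is (zero or) indecomposable. -/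
def IndecL (N : Submodule ↥(pathAlg Q k) ↥(pathAlg Q k)) : Prop :=
  N ≠ ⊥ ∧ ∀ N1 N2 : Submodule ↥(pathAlg Q k) ↥(pathAlg Q k),
    N1 ⊔ N2 = N → N1 ⊓ N2 = ⊥ → N1 = ⊥ ∨ N2 = ⊥

/-- `x` is "the" function `x_B` associated to the indecomposable sub-bimodule `B`:
`x i = none` iff `B e_i = 0`, and `x i = some j` implies `B e_i ≅ P_j` as left `A`-modules. -/
def IsXB (B : Submodule k ↥(pathAlg Q k)) (hB : IsIdeal Q k B) (x : Fin n → Option (Fin n)) :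
    Prop :=
  ∀ i, (x i = none ↔ BeiL Q k B hB i = ⊥) ∧
    ∀ j, x i = some j →
      Nonempty (↥(BeiL Q k B hB i) ≃ₗ[↥(pathAlg Q k)] ↥(Pmod Q k j))

/-- The subspace `B_x` of `A` associated to a (special) function `x` : the `k`-linear span
of all paths `a_{ts}` with `x s ≠ 0` and `t` a successor of `x s`. -/
def Bspan (x : Fin n → Option (Fin n)) : Submodule k ↥(pathAlg Q k) :=
  Submodule.span k {v | ∃ s xs t, x s = some xs ∧ Q.Reach xs t ∧ v = aEl Q k t s}

/-- The two-sided ideal `J_i`: the span of all paths of `Q` except the trivial path `e_i`. -/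
def J (i : Fin n) : Submodule k ↥(pathAlg Q k) :=
  Submodule.span k {v | ∃ t s, Q.Reach s t ∧ ¬(t = i ∧ s = i) ∧ v = aEl Q k t s}

/-- The indecomposable direct summand `J_s^{(q)}` of `J_s` corresponding to the connected
component (of `Q` with `s` deleted) containing the neighbour `t` of `s`: the span of all
paths `a_{pq}` with `p, q ∈ Γ^{(t)} ∪ {s}` other than `e_s`. -/
def Jc (s t : Fin n) : Submodule k ↥(pathAlg Q k) :=
  Submodule.span k {v | ∃ p q, Q.Reach q p ∧ p ∈ Q.Gamma s t ∪ {s} ∧ q ∈ Q.Gamma s t ∪ {s} ∧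
    ¬(p = s ∧ q = s) ∧ v = aEl Q k p q}

end Algebra

section Tensor

open TensorProduct

/-- The multiplication map `I ⊗_k J → A` for two `k`-subspaces `I`, `J` of a `k`-algebra `A`. -/
noncomputable def mulMap (k A : Type) [CommRing k] [Ring A] [Algebra k A]
    (I J : Submodule k A) : (↥I ⊗[k] ↥J) →ₗ[k] A :=
  TensorProduct.lift (LinearMap.compl₁₂ (LinearMap.mul k A) I.subtype J.subtype)

/-- The submodule of `I ⊗_k J` spanned by the "balancing" relators `ba ⊗ d - b ⊗ ad`;
the quotient of `I ⊗_k J` by it is `I ⊗_A J`, so the multiplication map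
`I ⊗_A J → A` is injective if and only if the kernel of `mulMap` equals `balRel`. -/
noncomputable def balRel (k A : Type) [CommRing k] [Ring A] [Algebra k A]
    (I J : Submodule k A) : Submodule k (↥I ⊗[k] ↥J) :=
  Submodule.span k {z | ∃ (b : I) (d : J) (a : A) (h1 : (b : A) * a ∈ I) (h2 : a * (d : A) ∈ J),
    z = (⟨(b : A) * a, h1⟩ : I) ⊗ₜ[k] d - (b ⊗ₜ[k] (⟨a * (d : A), h2⟩ : J))}

end Tensor


section AlgebraCombi

open TreeQuiver Matrix

variable {n : ℕ} (Q : TreeQuiver n) (k : Type) [Field k]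

lemma pathAlg_entry_zero (x : ↥(pathAlg Q k)) {i j : Fin n} (h : ¬ Q.Reach j i) :
    (x : Matrix (Fin n) (Fin n) k) i j = 0 := x.2 i j h

lemma aEl_coe {t s : Fin n} (h : Q.Reach s t) :
    ((aEl Q k t s : ↥(pathAlg Q k)) : Matrix (Fin n) (Fin n) k) =
      Matrix.single t s 1 := by
  rw [aEl, dif_pos h]

lemma aEl_coe_not {t s : Fin n} (h : ¬ Q.Reach s t) :
    ((aEl Q k t s : ↥(pathAlg Q k)) : Matrix (Fin n) (Fin n) k) = 0 := by
  rw [aEl, dif_neg h]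
  rfl

lemma e_coe (i : Fin n) :
    ((e Q k i : ↥(pathAlg Q k)) : Matrix (Fin n) (Fin n) k) = Matrix.single i i 1 := rfl

lemma stdB_apply {α : Type} [Zero α] (i j p q : Fin n) (c : α) :
    Matrix.single i j c p q = if i = p ∧ j = q then c else 0 := rfl

lemma aEl_ne_zero {t s : Fin n} (h : Q.Reach s t) : aEl Q k t s ≠ 0 := by
  intro h0
  have h1 : ((aEl Q k t s : ↥(pathAlg Q k)) : Matrix (Fin n) (Fin n) k) t s = 0 := by
    rw [h0]; rfl
  rw [aEl_coe Q k h, stdB_apply] at h1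
  simp at h1

lemma aEl_mul_aEl {t m s : Fin n} (h1 : Q.Reach m t) (h2 : Q.Reach s m) :
    aEl Q k t m * aEl Q k m s = aEl Q k t s := by
  apply Subtype.ext
  rw [MulMemClass.coe_mul, aEl_coe Q k h1, aEl_coe Q k h2,
    aEl_coe Q k (reach_trans h2 h1)]
  rw [Matrix.single_mul_single_same, one_mul]

/-- The combinatorial support of a subspace of the path algebra. -/
def SIdeal (B : Submodule k ↥(pathAlg Q k)) : Set (Fin n × Fin n) :=
  {p | Q.Reach p.1 p.2 ∧ aEl Q k p.2 p.1 ∈ B}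

lemma SIdeal_valid (B : Submodule k ↥(pathAlg Q k)) :
    ∀ p ∈ SIdeal Q k B, Q.Reach p.1 p.2 := fun _ hp => hp.1

lemma SIdeal_ext {B : Submodule k ↥(pathAlg Q k)} (hB : IsIdeal Q k B) :
    ∀ p ∈ SIdeal Q k B, ∀ s t, Q.Reach s p.1 → Q.Reach p.2 t → (s, t) ∈ SIdeal Q k B := by
  rintro ⟨ps, pt⟩ ⟨hr, hm⟩ s t hs ht
  refine ⟨reach_trans hs (reach_trans hr ht), ?_⟩
  have h1 : aEl Q k pt ps * aEl Q k ps s ∈ B := hB.2 _ _ hm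
  rw [aEl_mul_aEl Q k hr hs] at h1
  have h2 : aEl Q k t pt * aEl Q k pt s ∈ B := hB.1 _ _ h1
  rwa [aEl_mul_aEl Q k ht (reach_trans hs hr)] at h2

lemma entry_smul_aEl (x : ↥(pathAlg Q k)) (t s : Fin n) (hr : Q.Reach s t) :
    e Q k t * x * e Q k s = (x : Matrix (Fin n) (Fin n) k) t s • aEl Q k t s := by
  apply Subtype.ext
  rw [MulMemClass.coe_mul, MulMemClass.coe_mul, e_coe, e_coe, SetLike.val_smul,
    aEl_coe Q k hr]
  ext p q
  rw [Matrix.smul_apply, stdB_apply]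
  rcases eq_or_ne q s with rfl | hq
  · rcases eq_or_ne p t with rfl | hp
    · rw [Matrix.mul_single_apply_same, Matrix.single_mul_apply_same]
      simp
    · rw [Matrix.mul_single_apply_same,
        Matrix.single_mul_apply_of_ne (h := hp)]
      simp [Ne.symm hp]
  · rw [Matrix.mul_single_apply_of_ne (hbj := hq)]
    simp [Ne.symm hq]

lemma entry_mem {B : Submodule k ↥(pathAlg Q k)} (hB : IsIdeal Q k B) {x : ↥(pathAlg Q k)}
    (hx : x ∈ B) {t s : Fin n} (hts : (x : Matrix (Fin n) (Fin n) k) t s ≠ 0) :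
    (s, t) ∈ SIdeal Q k B := by
  have hr : Q.Reach s t := by
    by_contra h
    exact hts (pathAlg_entry_zero Q k x h)
  refine ⟨hr, ?_⟩
  have hmem : e Q k t * x * e Q k s ∈ B := hB.2 _ _ (hB.1 (e Q k t) x hx)
  rw [entry_smul_aEl Q k x t s hr] at hmem
  have h2 := B.smul_mem ((x : Matrix (Fin n) (Fin n) k) t s)⁻¹ hmem
  rwa [smul_smul, inv_mul_cancel₀ hts, one_smul] at h2

lemma eq_sum_aEl (x : ↥(pathAlg Q k)) :
    x = ∑ t : Fin n, ∑ s : Fin n, (x : Matrix (Fin n) (Fin n) k) t s • aEl Q k t s := by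
  apply Subtype.ext
  push_cast
  conv_lhs => rw [Matrix.matrix_eq_sum_single (x : Matrix (Fin n) (Fin n) k)]
  refine Finset.sum_congr rfl fun t _ => Finset.sum_congr rfl fun s _ => ?_
  by_cases hr : Q.Reach s t
  · rw [aEl_coe Q k hr, Matrix.smul_single, smul_eq_mul, mul_one]
  · rw [pathAlg_entry_zero Q k x hr, aEl_coe_not Q k hr, Matrix.single_zero]
    rw [smul_zero]

lemma mul_aEl (a : ↥(pathAlg Q k)) {t s : Fin n} (h : Q.Reach s t) :
    a * aEl Q k t s = ∑ t' : Fin n, (a : Matrix (Fin n) (Fin n) k) t' t • aEl Q k t' s := by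
  apply Subtype.ext
  push_cast
  rw [aEl_coe Q k h]
  ext p q
  rw [Matrix.sum_apply]
  have hsingle : ∀ t' : Fin n, t' ≠ p →
      ((a : Matrix (Fin n) (Fin n) k) t' t • ((aEl Q k t' s : ↥(pathAlg Q k)) :
        Matrix (Fin n) (Fin n) k)) p q = 0 := by
    intro t' hne
    rw [Matrix.smul_apply]
    by_cases hr : Q.Reach s t'
    · rw [aEl_coe Q k hr, stdB_apply]
      simp [hne]
    · rw [aEl_coe_not Q k hr]
      simp
  rw [Finset.sum_eq_single p (fun b _ hb => hsingle b hb) (by simp), Matrix.smul_apply]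
  rcases eq_or_ne q s with rfl | hq
  · rw [Matrix.mul_single_apply_same, mul_one]
    by_cases hr : Q.Reach q p
    · rw [aEl_coe Q k hr, stdB_apply]
      simp
    · rw [aEl_coe_not Q k hr]
      have hntp : ¬ Q.Reach t p := fun h' => hr (reach_trans h h')
      rw [pathAlg_entry_zero Q k a hntp]
      simp
  · rw [Matrix.mul_single_apply_of_ne (hbj := hq)]
    by_cases hr : Q.Reach s p
    · rw [aEl_coe Q k hr, stdB_apply]
      simp [Ne.symm hq]
    · rw [aEl_coe_not Q k hr]
      simp

lemma aEl_mul (a : ↥(pathAlg Q k)) {t s : Fin n} (h : Q.Reach s t) :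
    aEl Q k t s * a = ∑ s' : Fin n, (a : Matrix (Fin n) (Fin n) k) s s' • aEl Q k t s' := by
  apply Subtype.ext
  push_cast
  rw [aEl_coe Q k h]
  ext p q
  rw [Matrix.sum_apply]
  have hsingle : ∀ s' : Fin n, s' ≠ q →
      ((a : Matrix (Fin n) (Fin n) k) s s' • ((aEl Q k t s' : ↥(pathAlg Q k)) :
        Matrix (Fin n) (Fin n) k)) p q = 0 := by
    intro s' hne
    rw [Matrix.smul_apply]
    by_cases hr : Q.Reach s' t
    · rw [aEl_coe Q k hr, stdB_apply]
      simp [hne]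
    · rw [aEl_coe_not Q k hr]
      simp
  rw [Finset.sum_eq_single q (fun b _ hb => hsingle b hb) (by simp), Matrix.smul_apply]
  rcases eq_or_ne p t with rfl | hp
  · rw [Matrix.single_mul_apply_same, one_mul]
    by_cases hr : Q.Reach q p
    · rw [aEl_coe Q k hr, stdB_apply]
      simp
    · rw [aEl_coe_not Q k hr]
      have hnqs : ¬ Q.Reach q s := fun h' => hr (reach_trans h' h)
      rw [pathAlg_entry_zero Q k a hnqs]
      simp
  · rw [Matrix.single_mul_apply_of_ne (h := hp)]
    by_cases hr : Q.Reach q t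
    · rw [aEl_coe Q k hr, stdB_apply]
      simp [Ne.symm hp]
    · rw [aEl_coe_not Q k hr]
      simp

end AlgebraCombi


section AlgebraCombi2

open TreeQuiver Matrix

variable {n : ℕ} (Q : TreeQuiver n) (k : Type) [Field k]

def pspan (T : Set (Fin n × Fin n)) : Submodule k ↥(pathAlg Q k) :=
  Submodule.span k {v | ∃ p ∈ T, v = aEl Q k p.2 p.1}

lemma pspan_isIdeal {T : Set (Fin n × Fin n)}
    (hvalid : ∀ p ∈ T, Q.Reach p.1 p.2)
    (hext : ∀ p ∈ T, ∀ s t, Q.Reach s p.1 → Q.Reach p.2 t → (s, t) ∈ T) :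
    IsIdeal Q k (pspan Q k T) := by
  constructor
  · intro a x hx
    refine Submodule.span_induction ?_ ?_ ?_ ?_ hx
    · rintro v ⟨p, hpT, rfl⟩
      rw [mul_aEl Q k a (hvalid p hpT)]
      refine Submodule.sum_mem _ fun t' _ => ?_
      by_cases hr : Q.Reach p.2 t'
      · exact Submodule.smul_mem _ _ (Submodule.subset_span
          ⟨(p.1, t'), hext p hpT p.1 t' (reach_refl p.1) hr, rfl⟩)
      · rw [pathAlg_entry_zero Q k a hr, zero_smul]
        exact Submodule.zero_mem _
    · rw [mul_zero]; exact Submodule.zero_mem _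
    · intro x y _ _ h1 h2
      rw [mul_add]; exact Submodule.add_mem _ h1 h2
    · intro c x _ h1
      rw [mul_smul_comm]; exact Submodule.smul_mem _ _ h1
  · intro a x hx
    refine Submodule.span_induction ?_ ?_ ?_ ?_ hx
    · rintro v ⟨p, hpT, rfl⟩
      rw [aEl_mul Q k a (hvalid p hpT)]
      refine Submodule.sum_mem _ fun s' _ => ?_
      by_cases hr : Q.Reach s' p.1
      · exact Submodule.smul_mem _ _ (Submodule.subset_span
          ⟨(s', p.2), hext p hpT s' p.2 hr (reach_refl p.2), rfl⟩)
      · rw [pathAlg_entry_zero Q k a hr, zero_smul]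
        exact Submodule.zero_mem _
    · rw [zero_mul]; exact Submodule.zero_mem _
    · intro x y _ _ h1 h2
      rw [add_mul]; exact Submodule.add_mem _ h1 h2
    · intro c x _ h1
      rw [smul_mul_assoc]; exact Submodule.smul_mem _ _ h1

lemma pspan_support {T : Set (Fin n × Fin n)} {x : ↥(pathAlg Q k)} (hx : x ∈ pspan Q k T) :
    ∀ t s, (x : Matrix (Fin n) (Fin n) k) t s ≠ 0 → (s, t) ∈ T := by
  refine Submodule.span_induction ?_ ?_ ?_ ?_ hx
  · rintro v ⟨p, hpT, rfl⟩ t s hne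
    by_cases hr : Q.Reach p.1 p.2
    · rw [aEl_coe Q k hr, stdB_apply] at hne
      split_ifs at hne with hc
      · rw [← hc.1, ← hc.2]; exact hpT
      · exact absurd rfl hne
    · rw [aEl_coe_not Q k hr] at hne
      simp at hne
  · intro t s hne
    exact absurd rfl hne
  · intro x y _ _ ihx ihy t s hne
    by_cases h1 : (x : Matrix (Fin n) (Fin n) k) t s = 0
    · refine ihy t s ?_
      have hadd : ((x + y : ↥(pathAlg Q k)) : Matrix (Fin n) (Fin n) k) t s
          = (x : Matrix (Fin n) (Fin n) k) t s + (y : Matrix (Fin n) (Fin n) k) t s := rfl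
      rw [hadd, h1, zero_add] at hne
      exact hne
    · exact ihx t s h1
  · intro c x _ ih t s hne
    refine ih t s fun h0 => hne ?_
    have hsm : ((c • x : ↥(pathAlg Q k)) : Matrix (Fin n) (Fin n) k) t s
        = c * (x : Matrix (Fin n) (Fin n) k) t s := rfl
    rw [hsm, h0, mul_zero]

lemma pspan_eq {B : Submodule k ↥(pathAlg Q k)} (hB : IsIdeal Q k B) :
    pspan Q k (SIdeal Q k B) = B := by
  apply le_antisymm
  · rw [pspan, Submodule.span_le]
    rintro v ⟨p, hp, rfl⟩
    exact hp.2
  · intro x hx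
    rw [eq_sum_aEl Q k x]
    refine Submodule.sum_mem _ fun t _ => Submodule.sum_mem _ fun s _ => ?_
    by_cases hne : (x : Matrix (Fin n) (Fin n) k) t s = 0
    · rw [hne, zero_smul]; exact Submodule.zero_mem _
    · exact Submodule.smul_mem _ _ (Submodule.subset_span
        ⟨(s, t), entry_mem Q k hB hx hne, rfl⟩)

lemma SIdeal_conn {B : Submodule k ↥(pathAlg Q k)} (hInd : Indec Q k B) :
    ∀ p ∈ SIdeal Q k B, ∀ q ∈ SIdeal Q k B,
      Relation.ReflTransGen (stepP Q (SIdeal Q k B)) p q := by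
  obtain ⟨hBI, hBne, hmin⟩ := hInd
  intro p hp q hq
  by_contra hnc
  set S := SIdeal Q k B with hS
  set S1 : Set (Fin n × Fin n) := {x | x ∈ S ∧ Relation.ReflTransGen (stepP Q S) p x} with hS1
  set S2 : Set (Fin n × Fin n) := {x | x ∈ S ∧ ¬ Relation.ReflTransGen (stepP Q S) p x} with hS2
  have he := SIdeal_ext Q k hBI
  have hv1 : ∀ r ∈ S1, Q.Reach r.1 r.2 := fun r hr => hr.1.1
  have hv2 : ∀ r ∈ S2, Q.Reach r.1 r.2 := fun r hr => hr.1.1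
  have he1 : ∀ r ∈ S1, ∀ s t, Q.Reach s r.1 → Q.Reach r.2 t → (s, t) ∈ S1 := by
    intro r hr s t hs ht
    have hst : (s, t) ∈ S := he r hr.1 s t hs ht
    exact ⟨hst, hr.2.tail ⟨hr.1, hst, Or.inl ⟨hs, ht⟩⟩⟩
  have he2 : ∀ r ∈ S2, ∀ s t, Q.Reach s r.1 → Q.Reach r.2 t → (s, t) ∈ S2 := by
    intro r hr s t hs ht
    have hst : (s, t) ∈ S := he r hr.1 s t hs ht
    exact ⟨hst, fun hRT => hr.2 (hRT.tail ⟨hst, hr.1, Or.inr ⟨hs, ht⟩⟩)⟩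
  have hp1 : p ∈ S1 := ⟨hp, Relation.ReflTransGen.refl⟩
  have hq2 : q ∈ S2 := ⟨hq, hnc⟩
  have hsup : pspan Q k S1 ⊔ pspan Q k S2 = B := by
    rw [pspan, pspan, ← Submodule.span_union]
    have hU : ({v | ∃ r ∈ S1, v = aEl Q k r.2 r.1} ∪ {v | ∃ r ∈ S2, v = aEl Q k r.2 r.1})
        = {v | ∃ r ∈ S, v = aEl Q k r.2 r.1} := by
      ext v
      constructor
      · rintro (⟨r, hr, rfl⟩ | ⟨r, hr, rfl⟩)
        · exact ⟨r, hr.1, rfl⟩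
        · exact ⟨r, hr.1, rfl⟩
      · rintro ⟨r, hr, rfl⟩
        by_cases hrt : Relation.ReflTransGen (stepP Q S) p r
        · exact Or.inl ⟨r, ⟨hr, hrt⟩, rfl⟩
        · exact Or.inr ⟨r, ⟨hr, hrt⟩, rfl⟩
    rw [hU]
    exact pspan_eq Q k hBI
  have hinf : pspan Q k S1 ⊓ pspan Q k S2 = ⊥ := by
    rw [eq_bot_iff]
    rintro x ⟨hx1, hx2⟩
    have hz : ∀ t s, (x : Matrix (Fin n) (Fin n) k) t s = 0 := by
      intro t s
      by_contra hne
      exact (pspan_support Q k hx2 t s hne).2 (pspan_support Q k hx1 t s hne).2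
    have hx0 : x = 0 := by
      apply Subtype.ext
      ext t s
      exact hz t s
    rw [hx0]
    exact Submodule.zero_mem _
  rcases hmin _ _ (pspan_isIdeal Q k hv1 he1) (pspan_isIdeal Q k hv2 he2) hsup hinf with h1 | h1
  · have hmem : aEl Q k p.2 p.1 ∈ pspan Q k S1 := Submodule.subset_span ⟨p, hp1, rfl⟩
    rw [h1] at hmem
    exact aEl_ne_zero Q k hp.1 (Submodule.mem_bot k |>.mp hmem)
  · have hmem : aEl Q k q.2 q.1 ∈ pspan Q k S2 := Submodule.subset_span ⟨q, hq2, rfl⟩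
    rw [h1] at hmem
    exact aEl_ne_zero Q k hq.1 (Submodule.mem_bot k |>.mp hmem)

lemma goodSet_SIdeal {B : Submodule k ↥(pathAlg Q k)} (hInd : Indec Q k B) :
    GoodSet Q (SIdeal Q k B) :=
  ⟨SIdeal_valid Q k B, SIdeal_ext Q k hInd.1, SIdeal_conn Q k hInd⟩

lemma mul_isIdeal {B D : Submodule k ↥(pathAlg Q k)} (hB : IsIdeal Q k B)
    (hD : IsIdeal Q k D) : IsIdeal Q k (B * D) := by
  constructor
  · intro a x hx
    refine Submodule.mul_induction_on hx (fun b hb d hd => ?_) (fun x y hx' hy' => ?_)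
    · rw [← mul_assoc]
      exact Submodule.mul_mem_mul (hB.1 a b hb) hd
    · rw [mul_add]
      exact Submodule.add_mem _ hx' hy'
  · intro a x hx
    refine Submodule.mul_induction_on hx (fun b hb d hd => ?_) (fun x y hx' hy' => ?_)
    · rw [mul_assoc]
      exact Submodule.mul_mem_mul hb (hD.2 a d hd)
    · rw [add_mul]
      exact Submodule.add_mem _ hx' hy'

lemma mul_entry_mid {B D : Submodule k ↥(pathAlg Q k)} (hB : IsIdeal Q k B)
    (hD : IsIdeal Q k D) {x : ↥(pathAlg Q k)} (hx : x ∈ B * D) :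
    ∀ t s, (x : Matrix (Fin n) (Fin n) k) t s ≠ 0 →
      ∃ m, (m, t) ∈ SIdeal Q k B ∧ (s, m) ∈ SIdeal Q k D := by
  refine Submodule.mul_induction_on hx (fun b hb d hd => ?_) (fun x y hx' hy' => ?_)
  · intro t s hne
    have hmul : ((b * d : ↥(pathAlg Q k)) : Matrix (Fin n) (Fin n) k) t s
        = ∑ m, (b : Matrix (Fin n) (Fin n) k) t m * (d : Matrix (Fin n) (Fin n) k) m s := by
      rw [MulMemClass.coe_mul, Matrix.mul_apply]
    rw [hmul] at hne
    obtain ⟨m, -, hm⟩ := Finset.exists_ne_zero_of_sum_ne_zero hne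
    exact ⟨m, entry_mem Q k hB hb (left_ne_zero_of_mul hm),
      entry_mem Q k hD hd (right_ne_zero_of_mul hm)⟩
  · intro t s hne
    by_cases h1 : (x : Matrix (Fin n) (Fin n) k) t s = 0
    · refine hy' t s ?_
      have hadd : ((x + y : ↥(pathAlg Q k)) : Matrix (Fin n) (Fin n) k) t s
          = (x : Matrix (Fin n) (Fin n) k) t s + (y : Matrix (Fin n) (Fin n) k) t s := rfl
      rw [hadd, h1, zero_add] at hne
      exact hne
    · exact hx' t s h1

lemma SIdeal_mul {B D : Submodule k ↥(pathAlg Q k)} (hB : IsIdeal Q k B)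
    (hD : IsIdeal Q k D) :
    SIdeal Q k (B * D) = compS (SIdeal Q k B) (SIdeal Q k D) := by
  ext p
  constructor
  · rintro ⟨hr, hm⟩
    have hne : ((aEl Q k p.2 p.1 : ↥(pathAlg Q k)) : Matrix (Fin n) (Fin n) k) p.2 p.1 ≠ 0 := by
      rw [aEl_coe Q k hr, stdB_apply]
      simp
    obtain ⟨m, h1, h2⟩ := mul_entry_mid Q k hB hD hm p.2 p.1 hne
    exact ⟨m, h1, h2⟩
  · rintro ⟨m, ⟨hr1, hm1⟩, ⟨hr2, hm2⟩⟩
    refine ⟨reach_trans hr2 hr1, ?_⟩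
    rw [← aEl_mul_aEl Q k hr1 hr2]
    exact Submodule.mul_mem_mul hm1 hm2

lemma suppB_eq (B : Submodule k ↥(pathAlg Q k)) :
    suppB Q k B = MCset Q (SIdeal Q k B) := by
  ext c
  constructor
  · rintro ⟨hmc, hm⟩
    exact ⟨hmc, hmc.2.2, hm⟩
  · rintro ⟨hmc, _, hm⟩
    exact ⟨hmc, hm⟩

end AlgebraCombi2

/-- If `B`, `D` are indecomposable sub-bimodules of `A` with `BD ≠ 0`, then
`supp(BD) = supp(B) ∩ supp(D)` (as subgraphs of `Q`, i.e. the vertex set of `supp(BD)`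
is the intersection of the vertex sets, and its edges are exactly the common edges). -/
theorem statement1 {n : ℕ} (k : Type) [Field k] [IsAlgClosed k] (hn : 1 < n)
    (Q : TreeQuiver n) (hadm : Q.Admissible) (hK' : ∃ s, Q.inK' s)
    (B D : Submodule k ↥(pathAlg Q k)) (hB : Indec Q k B) (hD : Indec Q k D)
    (hBD : B * D ≠ ⊥) :
    Q.suppVerts (suppB Q k (B * D)) = Q.suppVerts (suppB Q k B) ∩ Q.suppVerts (suppB Q k D) ∧
    ∀ i j, Q.suppAdj (suppB Q k (B * D)) i j ↔
      (Q.suppAdj (suppB Q k B) i j ∧ Q.suppAdj (suppB Q k D) i j) := by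
  classical
  have hBI := hB.1
  have hDI := hD.1
  have hgB := goodSet_SIdeal Q k hB
  have hgD := goodSet_SIdeal Q k hD
  obtain ⟨x, hxBD, hxne⟩ := (Submodule.ne_bot_iff _).mp hBD
  have hentry : ∃ t s, (x : Matrix (Fin n) (Fin n) k) t s ≠ 0 := by
    by_contra h
    push_neg at h
    refine hxne (Subtype.ext ?_)
    ext t s
    exact h t s
  obtain ⟨t₁, s₁, hne⟩ := hentry
  obtain ⟨m₀, hmB, hmD⟩ := mul_entry_mid Q k hBI hDI hxBD t₁ s₁ hne
  have hpivot : ∃ s₀ m₀ t₀, (m₀, t₀) ∈ SIdeal Q k B ∧ (s₀, m₀) ∈ SIdeal Q k D :=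
    ⟨s₁, m₀, t₁, hmB, hmD⟩
  have hPI : IsIdeal Q k (B * D) := mul_isIdeal Q k hBI hDI
  have hPval := SIdeal_valid Q k (B * D)
  have hPext := SIdeal_ext Q k hPI
  have hBval := SIdeal_valid Q k B
  have hBext := SIdeal_ext Q k hBI
  have hDval := SIdeal_valid Q k D
  have hDext := SIdeal_ext Q k hDI
  constructor
  · ext v
    rw [Set.mem_inter_iff, suppB_eq, suppB_eq, suppB_eq,
      vchar hPval hPext v, vchar hBval hBext v, vchar hDval hDext v,
      SIdeal_mul Q k hBI hDI]
    exact combi_vert hadm hgB hgD hpivot v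
  · intro i j
    rw [suppB_eq, suppB_eq, suppB_eq]
    by_cases hadj : Q.G.Adj i j
    · rcases hadj.2 with harr | harr
      · rw [echar hPval hPext harr, echar hBval hBext harr, echar hDval hDext harr,
          SIdeal_mul Q k hBI hDI]
        exact combi_edge hadm hgB hgD hpivot harr
      · rw [suppAdj_comm (S := MCset Q (SIdeal Q k (B * D))),
          suppAdj_comm (S := MCset Q (SIdeal Q k B)),
          suppAdj_comm (S := MCset Q (SIdeal Q k D)),
          echar hPval hPext harr, echar hBval hBext harr, echar hDval hDext harr,
          SIdeal_mul Q k hBI hDI]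
        exact combi_edge hadm hgB hgD hpivot harr
    · constructor
      · intro h
        exact absurd h.1 hadj
      · rintro ⟨h1, _⟩
        exact absurd h1.1 hadj

end DPF
end

section
/- For every sub-bimodule B of the A-A-bimodule A (i.e., every two-sided ideal of A), the set of all paths a_{ij} of Q that are contained in B is a k-basis of B. -/
set_option maxHeartbeats 1000000
set_option synthInstance.maxHeartbeats 400000

namespace DPF

open Matrix

open TreeQuiver

lemma corner_eq {n : ℕ} {k : Type} [Field k] (M : Matrix (Fin n) (Fin n) k) (t s : Fin n) :
    Matrix.single t t 1 * M * Matrix.single s s 1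
      = Matrix.single t s (M t s) := by
  ext i j
  simp only [Matrix.mul_apply, Matrix.single, Matrix.of_apply, ite_and,
    Finset.sum_ite_eq, Finset.sum_ite_eq', Finset.mem_univ, if_true, ite_mul, mul_ite,
    one_mul, mul_one, zero_mul, mul_zero, Finset.sum_ite_irrel, Finset.sum_const_zero]
  by_cases ht : t = i <;> by_cases hs : s = j <;> simp [ht, hs]

lemma aEl_val {n : ℕ} (Q : TreeQuiver n) (k : Type) [Field k] {t s : Fin n}
    (h : Q.Reach s t) : (aEl Q k t s : Matrix (Fin n) (Fin n) k)
      = Matrix.single t s 1 := by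
  rw [aEl, dif_pos h]

lemma aEl_val_not {n : ℕ} (Q : TreeQuiver n) (k : Type) [Field k] {t s : Fin n}
    (h : ¬ Q.Reach s t) : aEl Q k t s = 0 := by
  rw [aEl, dif_neg h]

/-- For every sub-bimodule (two-sided ideal) `B` of `A`, the set of paths
`a_{ts}` of `Q` contained in `B` is a `k`-basis of `B`: it is linearly independent
and spans `B`. -/
theorem statement7 {n : ℕ} (k : Type) [Field k] [IsAlgClosed k] (hn : 1 < n)
    (Q : TreeQuiver n) (hadm : Q.Admissible) (hK' : ∃ s, Q.inK' s)
    (B : Submodule k ↥(pathAlg Q k)) (hB : IsIdeal Q k B) :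
    Submodule.span k {v : ↥(pathAlg Q k) | (∃ t s, Q.Reach s t ∧ v = aEl Q k t s) ∧ v ∈ B} = B ∧
    LinearIndependent k
      (fun v : {v : ↥(pathAlg Q k) // (∃ t s, Q.Reach s t ∧ v = aEl Q k t s) ∧ v ∈ B} =>
        (v : ↥(pathAlg Q k))) := by
  -- key fact: corners of elements of B are in B, scaled paths
  have key : ∀ x ∈ B, ∀ t s : Fin n,
      ((x : Matrix (Fin n) (Fin n) k) t s) • aEl Q k t s ∈ B := by
    intro x hx t s
    by_cases hr : Q.Reach s t
    · have hc : e Q k t * x * e Q k s ∈ B := hB.2 _ _ (hB.1 _ x hx)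
      have : e Q k t * x * e Q k s = ((x : Matrix (Fin n) (Fin n) k) t s) • aEl Q k t s := by
        apply Subtype.ext
        push_cast [e, aEl_val Q k hr]
        rw [corner_eq, Matrix.smul_single, smul_eq_mul, mul_one]
      rwa [this] at hc
    · have hz : (x : Matrix (Fin n) (Fin n) k) t s = 0 := x.2 t s hr
      rw [hz, zero_smul]; exact B.zero_mem
  constructor
  · apply le_antisymm
    · rw [Submodule.span_le]; intro v hv; exact hv.2
    · intro x hx
      have hxe : x = ∑ t : Fin n, ∑ s : Fin n,
          ((x : Matrix (Fin n) (Fin n) k) t s) • aEl Q k t s := by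
        apply Subtype.ext
        push_cast
        calc (x : Matrix (Fin n) (Fin n) k)
            = ∑ t : Fin n, ∑ s : Fin n,
              Matrix.single t s ((x : Matrix (Fin n) (Fin n) k) t s) :=
              Matrix.matrix_eq_sum_single _
          _ = _ := by
              refine Finset.sum_congr rfl fun t _ => Finset.sum_congr rfl fun s _ => ?_
              by_cases hr : Q.Reach s t
              · rw [aEl_val Q k hr, Matrix.smul_single, smul_eq_mul, mul_one]
              · rw [x.2 t s hr, aEl_val_not Q k hr]
                simp
      rw [hxe]
      refine Submodule.sum_mem _ fun t _ => Submodule.sum_mem _ fun s _ => ?_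
      by_cases hr : Q.Reach s t
      · by_cases hz : (x : Matrix (Fin n) (Fin n) k) t s = 0
        · rw [hz, zero_smul]; exact Submodule.zero_mem _
        · have haB : aEl Q k t s ∈ B := by
            have := B.smul_mem ((x : Matrix (Fin n) (Fin n) k) t s)⁻¹ (key x hx t s)
            rwa [smul_smul, inv_mul_cancel₀ hz, one_smul] at this
          exact Submodule.smul_mem _ _
            (Submodule.subset_span ⟨⟨t, s, hr, rfl⟩, haB⟩)
      · rw [aEl_val_not Q k hr, smul_zero]; exact Submodule.zero_mem _
  · -- linear independence
    set S := {v : ↥(pathAlg Q k) | (∃ t s, Q.Reach s t ∧ v = aEl Q k t s) ∧ v ∈ B}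
    have g : ∀ v : S, ∃ p : Fin n × Fin n, Q.Reach p.2 p.1 ∧ (v : ↥(pathAlg Q k)) = aEl Q k p.1 p.2 := by
      rintro ⟨v, ⟨t, s, hr, rfl⟩, -⟩
      exact ⟨(t, s), hr, rfl⟩
    choose gp hgr hgv using g
    have hbasis : LinearIndependent k
        (fun p : Fin n × Fin n => Matrix.single p.1 p.2 (1 : k)) := by
      have := (Matrix.stdBasis k (Fin n) (Fin n)).linearIndependent
      convert this using 1
      funext p
      exact (Matrix.stdBasis_eq_single k p.1 p.2).symm
    have hginj : Function.Injective gp := by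
      intro v w hvw
      apply Subtype.ext
      rw [hgv v, hgv w, hvw]
    have hcomp : LinearIndependent k
        (fun v : S => ((v : ↥(pathAlg Q k)) : Matrix (Fin n) (Fin n) k)) := by
      have := hbasis.comp gp hginj
      convert this using 1
      funext v
      show ((v : ↥(pathAlg Q k)) : Matrix (Fin n) (Fin n) k)
        = Matrix.single (gp v).1 (gp v).2 1
      rw [hgv v, aEl_val Q k (hgr v)]
    exact hcomp.of_comp (Subalgebra.val (pathAlg Q k)).toLinearMap


end DPF
end
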